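/- For all integers q ≥ 2, x ≥ 1, and m ≥ 2, the number of admissible words of length m whose leftmost symbol is at most q−2 equals (q−1)·N_q(m−1,x). -/

import Mathlib

/-- A word `w` of length `m` over the alphabet `{0, ..., q-1}` (with `w ⟨m-1,_⟩` the
leftmost/most significant symbol) is admissible for the `Q^q_x` constraint if it contains
no forbidden pattern `(q-1) δ^r (q-1)` with `1 ≤ r ≤ x` and each symbol of `δ^r` at most `q-2`. -/
def IsAdmissible (q x m : ℕ) (w : Fin m → Fin q) : Prop :=
  ∀ (i r : ℕ) (_hr1 : 1 ≤ r) (_hr2 : r ≤ x) (h : i + r + 1 < m),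
    ¬((w ⟨i + r + 1, h⟩ : ℕ) = q - 1 ∧
      (w ⟨i, by omega⟩ : ℕ) = q - 1 ∧
      ∀ (j : ℕ) (_hj1 : 1 ≤ j) (_hj2 : j ≤ r), (w ⟨i + j, by omega⟩ : ℕ) ≤ q - 2)

/-- `Nadm q x m` is the number of admissible words of length `m`. -/
noncomputable def Nadm (q x m : ℕ) : ℕ :=
  Nat.card {w : Fin m → Fin q // IsAdmissible q x m w}

/-- Lexicographic comparison of words of equal length: `w < w'` iff at the highest
index where they differ `w` has the smaller symbol. -/
def LexLt {q m : ℕ} (w w' : Fin m → Fin q) : Prop :=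
  ∃ i : Fin m, w i < w' i ∧ ∀ j : Fin m, i < j → w j = w' j

/-- The lexicographic rank of a word among admissible words of its length. -/
noncomputable def rankOf (q x m : ℕ) (w : Fin m → Fin q) : ℕ :=
  Nat.card {v : Fin m → Fin q // IsAdmissible q x m v ∧ LexLt v w}


lemma adm_snoc_iff (q x n : ℕ) (hq : 2 ≤ q) (w : Fin (n+1) → Fin q)
    (hw : (w (Fin.last n) : ℕ) ≤ q - 2) :
    IsAdmissible q x (n+1) w ↔ IsAdmissible q x n (fun i => w i.castSucc) := by
  constructor
  · intro h i r hr1 hr2 hi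
    rintro ⟨h1, h2, h3⟩
    exact h i r hr1 hr2 (by omega) ⟨h1, h2, fun j hj1 hj2 => h3 j hj1 hj2⟩
  · intro h i r hr1 hr2 hi
    rintro ⟨h1, h2, h3⟩
    by_cases hc : i + r + 1 = n
    · have : (⟨i + r + 1, hi⟩ : Fin (n+1)) = Fin.last n := Fin.ext (by simp [hc])
      rw [this] at h1
      omega
    · have hi' : i + r + 1 < n := by omega
      exact h i r hr1 hr2 hi' ⟨h1, h2, fun j hj1 hj2 => h3 j hj1 hj2⟩

noncomputable def admEquiv (q x n : ℕ) (hq : 2 ≤ q) :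
    {w : Fin (n+1) → Fin q // IsAdmissible q x (n+1) w ∧ (w (Fin.last n) : ℕ) ≤ q - 2} ≃
      Fin (q-1) × {v : Fin n → Fin q // IsAdmissible q x n v} where
  toFun w := (⟨(w.1 (Fin.last n) : ℕ), by have := w.2.2; omega⟩,
    ⟨fun i => w.1 i.castSucc, (adm_snoc_iff q x n hq w.1 w.2.2).1 w.2.1⟩)
  invFun p := ⟨Fin.snoc p.2.1 ⟨p.1.1, by omega⟩, by
    have hlast : (Fin.snoc p.2.1 (⟨p.1.1, by omega⟩ : Fin q) : Fin (n+1) → Fin q) (Fin.last n)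
        = ⟨p.1.1, by omega⟩ := Fin.snoc_last _ _
    constructor
    · rw [adm_snoc_iff q x n hq _ (by rw [hlast]; simp; omega)]
      convert p.2.2 using 2 with i
      exact Fin.snoc_castSucc _ _ _
    · rw [hlast]; simp; omega⟩
  left_inv w := by
    ext i
    refine Fin.lastCases ?_ ?_ i
    · simp
    · intro j; simp
  right_inv p := by
    refine Prod.ext (Fin.ext ?_) (Subtype.ext (funext fun i => ?_))
    · simp
    · simp

/-- counting admissible words whose leftmost symbol is at most `q-2`. -/
theorem stmt_2 (q x m : ℕ) (hq : 2 ≤ q) (hx : 1 ≤ x) (hm : 2 ≤ m) :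
    Nat.card {w : Fin m → Fin q //
        IsAdmissible q x m w ∧ (w ⟨m - 1, by omega⟩ : ℕ) ≤ q - 2} =
      (q - 1) * Nadm q x (m - 1) := by
  obtain ⟨n, rfl⟩ : ∃ n, m = n + 1 := ⟨m - 1, by omega⟩
  have := Nat.card_congr (admEquiv q x n hq)
  simp only [Nat.card_prod, Nat.card_eq_fintype_card, Fintype.card_fin] at this ⊢
  convert this using 3 <;> rfl
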